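/- Let (X,d,μ) be a metric measure space and p ∈ [1,∞). Suppose μ satisfies a uniform comparability condition with parameters r₀, C. Then for every r ∈ (0,r₀) the averaging operator A_r, defined by A_r f(x) := ⨍_{B_r(x)} f dμ, maps L^p(X,μ) boundedly into itself with operator norm at most C^{1/p}. -/

import Mathlib

open MeasureTheory Filter Metric Set
open scoped ENNReal Topology

set_option linter.unusedTactic false
set_option linter.unusedVariables false

private lemma lsc_ball_lintegral {X : Type*} [MetricSpace X] [MeasurableSpace X] [BorelSpace X]
    (μ : Measure X) {r : ℝ} (hr : 0 < r) (h : X → ℝ≥0∞) (hh : Measurable h) :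
    LowerSemicontinuous (fun x => ∫⁻ y in ball x r, h y ∂μ) := by
  intro x c hc
  dsimp only at hc
  have hkey : ∫⁻ y in ball x r, h y ∂μ
      = ⨆ n : ℕ, ∫⁻ y in ball x (r - r / (n + 2)), h y ∂μ := by
    have hmono : ∀ n m : ℕ, n ≤ m →
        (fun y => (ball x (r - r / (n + 2))).indicator h y)
          ≤ fun y => (ball x (r - r / (m + 2))).indicator h y := by
      intro n m hnm
      apply Set.indicator_le_indicator_of_subset _ (fun y => zero_le)
      apply ball_subset_ball
      have hnm' : ((n:ℝ) + 2) ≤ (m:ℝ) + 2 := by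
        have := (Nat.cast_le (α := ℝ)).2 hnm; linarith
      have hdiv : r / ((m:ℝ) + 2) ≤ r / ((n:ℝ) + 2) := by
        apply div_le_div_of_nonneg_left hr.le (by positivity) hnm'
      linarith
    have hpt : ∀ y, (ball x r).indicator h y
        = ⨆ n : ℕ, (ball x (r - r / (n + 2))).indicator h y := by
      intro y
      apply le_antisymm
      · by_cases hy : y ∈ ball x r
        · rw [Set.indicator_of_mem hy]
          rw [mem_ball] at hy
          obtain ⟨n, hn⟩ := exists_nat_gt (r / (r - dist y x))
          have hpos : 0 < r - dist y x := by linarith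
          have hlt : r / ((n:ℝ) + 2) < r - dist y x := by
            rw [div_lt_iff₀ (by positivity)]
            have h1 : r / (r - dist y x) < (n:ℝ) + 2 := by linarith
            calc r = (r / (r - dist y x)) * (r - dist y x) := by field_simp
            _ < ((n:ℝ) + 2) * (r - dist y x) := mul_lt_mul_of_pos_right h1 hpos
            _ = (r - dist y x) * ((n:ℝ) + 2) := by ring
          have hy' : y ∈ ball x (r - r / (n + 2)) := by
            rw [mem_ball]; push_cast; linarith
          rw [← Set.indicator_of_mem hy' h]
          exact le_iSup (fun n : ℕ => (ball x (r - r / ((n:ℝ) + 2))).indicator h y) n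
        · rw [Set.indicator_of_notMem hy]; exact zero_le
      · apply iSup_le
        intro n
        apply Set.indicator_le_indicator_of_subset _ (fun y => zero_le)
        apply ball_subset_ball
        have : (0:ℝ) < r / ((n:ℝ)+2) := by positivity
        linarith
    rw [← lintegral_indicator measurableSet_ball]
    simp_rw [hpt]
    rw [lintegral_iSup (fun n => hh.indicator measurableSet_ball) (fun n m hnm => hmono n m hnm)]
    congr 1
    ext n
    rw [lintegral_indicator measurableSet_ball]
  rw [hkey, gt_iff_lt, lt_iSup_iff] at hc
  obtain ⟨n, hn⟩ := hc
  have hrn : 0 < r / ((n:ℝ) + 2) := by positivity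
  filter_upwards [ball_mem_nhds x hrn] with z hz
  refine lt_of_lt_of_le hn (lintegral_mono_set ?_)
  intro y hy
  rw [mem_ball] at hy hz ⊢
  push_cast at hy
  calc dist y z ≤ dist y x + dist x z := dist_triangle y x z
  _ < (r - r / ((n:ℝ)+2)) + r / ((n:ℝ)+2) := by
      rw [dist_comm x z]; exact add_lt_add hy hz
  _ = r := by ring

private lemma ball_dense_countable {X : Type*} [MetricSpace X] [MeasurableSpace X] [BorelSpace X]
    (μ : Measure X)
    (hμ : ∀ (x : X) (r : ℝ), 0 < r → 0 < μ (ball x r) ∧ μ (ball x r) < ∞)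
    (c : X) (R : ℝ) :
    ∃ D : Set X, D.Countable ∧ ball c R ⊆ closure D := by
  classical
  by_cases hR : 0 < R
  swap
  · exact ⟨∅, countable_empty, by rw [ball_eq_empty.2 (not_lt.1 hR)]; exact empty_subset _⟩
  -- for each m, a maximal (1/(m+1))-separated subset of the ball
  have hmax : ∀ m : ℕ, ∃ M : Set X, (M ⊆ ball c R ∧
      (∀ a ∈ M, ∀ b ∈ M, a ≠ b → 1/((m:ℝ)+1) ≤ dist a b)) ∧
      ∀ z ∈ ball c R, ∃ q ∈ M, dist z q < 1/((m:ℝ)+1) := by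
    intro m
    set ε : ℝ := 1/((m:ℝ)+1) with hε
    have hε0 : 0 < ε := by positivity
    set S : Set (Set X) := {M | M ⊆ ball c R ∧ ∀ a ∈ M, ∀ b ∈ M, a ≠ b → ε ≤ dist a b} with hS
    have hchain : ∀ ch ⊆ S, IsChain (· ⊆ ·) ch → ch.Nonempty →
        ∃ ub ∈ S, ∀ s ∈ ch, s ⊆ ub := by
      intro ch hchS hchain _
      refine ⟨⋃₀ ch, ⟨?_, ?_⟩, fun s hs => subset_sUnion_of_mem hs⟩
      · exact sUnion_subset fun M hM => (hchS hM).1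
      · intro a ha b hb hab
        obtain ⟨Ma, hMa, haMa⟩ := ha
        obtain ⟨Mb, hMb, hbMb⟩ := hb
        rcases hchain.total hMa hMb with h | h
        · exact (hchS hMb).2 a (h haMa) b hbMb hab
        · exact (hchS hMa).2 a haMa b (h hbMb) hab
    obtain ⟨M, _, hMmax⟩ := zorn_subset_nonempty S hchain ∅ ⟨empty_subset _, by simp⟩
    refine ⟨M, hMmax.1, ?_⟩
    intro z hz
    by_contra hcon
    push_neg at hcon
    have hzM : z ∉ M := by
      intro hzM
      have := hcon z hzM
      rw [dist_self] at this
      linarith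
    have hins : insert z M ∈ S := by
      refine ⟨insert_subset hz hMmax.1.1, ?_⟩
      intro a ha b hb hab
      rcases ha with rfl | ha' <;> rcases hb with rfl | hb'
      · exact absurd rfl hab
      · exact hcon b hb'
      · rw [dist_comm]; exact hcon a ha'
      · exact hMmax.1.2 a ha' b hb' hab
    have := hMmax.2 hins (subset_insert z M)
    exact hzM (this (mem_insert z M))
  choose M hM hMdense using hmax
  -- each M m is countable
  have hMc : ∀ m, (M m).Countable := by
    intro m
    set δ : ℝ := 1/((m:ℝ)+1)/2 with hδ
    have hδ0 : 0 < δ := by positivity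
    have hdisj : Pairwise (Function.onFun Disjoint (fun z : M m => ball (z : X) δ)) := by
      intro a b hab
      have hne : (a : X) ≠ (b : X) := fun h => hab (Subtype.ext h)
      refine ball_disjoint_ball ?_
      have := (hM m).2 a a.2 b b.2 hne
      rw [hδ]; linarith
    have hsub : (⋃ z : M m, ball (z : X) δ) ⊆ ball c (R + 1) := by
      rintro w ⟨t, ⟨z, rfl⟩, hw⟩
      have h1 : dist (z : X) c < R := mem_ball.1 ((hM m).1 z.2)
      have h2 : dist w (z : X) < δ := mem_ball.1 hw
      have hδ1 : δ ≤ 1 := by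
        have h1m : (1:ℝ) ≤ (m:ℝ) + 1 := by
          have := Nat.cast_nonneg (α := ℝ) m
          linarith
        have : 1/((m:ℝ)+1) ≤ 1 := by
          rw [div_le_one (by linarith)]
          linarith
        rw [hδ]
        linarith
      rw [mem_ball]
      calc dist w c ≤ dist w (z:X) + dist (z:X) c := dist_triangle _ _ _
      _ < δ + R := by linarith
      _ ≤ R + 1 := by linarith
    have hfin : μ (⋃ z : M m, ball (z : X) δ) ≠ ∞ :=
      (lt_of_le_of_lt (measure_mono hsub) (hμ c (R+1) (by linarith)).2).ne
    have hcnt := MeasureTheory.Measure.countable_meas_pos_of_disjoint_of_meas_iUnion_ne_top μ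
      (fun z : M m => measurableSet_ball) hdisj hfin
    have hall : {z : M m | 0 < μ (ball (z : X) δ)} = univ :=
      eq_univ_of_forall (fun z => (hμ (z : X) δ hδ0).1)
    rw [hall] at hcnt
    have : Countable (M m) := countable_univ_iff.1 hcnt
    exact countable_coe_iff.1 this
  refine ⟨⋃ m, M m, countable_iUnion hMc, ?_⟩
  intro z hz
  rw [Metric.mem_closure_iff]
  intro ε hε0
  obtain ⟨m, hm⟩ := exists_nat_one_div_lt hε0
  obtain ⟨q, hqM, hq⟩ := hMdense m z hz
  exact ⟨q, mem_iUnion.2 ⟨m, hqM⟩, lt_trans hq hm⟩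

private lemma avg_pow_le {X : Type*} [MeasurableSpace X] (μ : Measure X) {t : ℝ} (ht : 1 ≤ t)
    {s : Set X} (hs0 : μ s ≠ 0) (hstop : μ s ≠ ∞) {f : X → ℝ}
    (hfm : AEMeasurable f (μ.restrict s)) :
    (‖⨍ y in s, f y ∂μ‖₊ : ℝ≥0∞) ^ t
      ≤ (μ s)⁻¹ * ∫⁻ y in s, (‖f y‖₊ : ℝ≥0∞) ^ t ∂μ := by
  have ht0 : (0:ℝ) < t := lt_of_lt_of_le one_pos ht
  set J : ℝ≥0∞ := ∫⁻ y in s, (‖f y‖₊ : ℝ≥0∞) ∂μ with hJ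
  set A : ℝ≥0∞ := ∫⁻ y in s, (‖f y‖₊ : ℝ≥0∞) ^ t ∂μ with hA
  -- step 1 : ‖average‖ ≤ (μ s)⁻¹ * J
  have hstep1 : (‖⨍ y in s, f y ∂μ‖₊ : ℝ≥0∞) ≤ (μ s)⁻¹ * J := by
    rw [setAverage_eq]
    rw [nnnorm_smul]
    push_cast
    have hcoef : (‖(μ.real s)⁻¹‖₊ : ℝ≥0∞) = (μ s)⁻¹ := by
      rw [measureReal_def, ← ENNReal.ofReal_coe_nnreal, coe_nnnorm, Real.norm_of_nonneg (by positivity),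
        ENNReal.ofReal_inv_of_pos (ENNReal.toReal_pos hs0 hstop),
        ENNReal.ofReal_toReal hstop]
    rw [hcoef]
    exact mul_le_mul_right (enorm_integral_le_lintegral_enorm _) _
  -- step 2 : Hölder : J ^ t ≤ A * (μ s) ^ (t - 1)
  have hstep2 : J ^ t ≤ A * (μ s) ^ (t - 1) := by
    rcases eq_or_lt_of_le ht with htone | htone
    · subst htone
      simp [hJ, hA, ENNReal.rpow_one]
    · have hpq : t.HolderConjugate (t / (t - 1)) := Real.HolderConjugate.conjExponent htone
      have hholder := ENNReal.lintegral_mul_le_Lp_mul_Lq (μ.restrict s) hpq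
        (hfm.enorm) (aemeasurable_const (b := (1:ℝ≥0∞)))
      simp only [Pi.mul_apply, mul_one, ENNReal.one_rpow] at hholder
      have hone : ∫⁻ _ in s, (1:ℝ≥0∞) ∂μ = μ s := setLIntegral_one s
      rw [hone] at hholder
      -- hholder : J ≤ (A) ^ (1/t) * (μ s) ^ (1/(t/(t-1)))
      have h2 : J ^ t ≤ ((A ^ (1/t)) * (μ s) ^ (1/(t/(t-1)))) ^ t :=
        ENNReal.rpow_le_rpow hholder ht0.le
      refine h2.trans_eq ?_
      rw [ENNReal.mul_rpow_of_nonneg _ _ ht0.le, ← ENNReal.rpow_mul, ← ENNReal.rpow_mul]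
      congr 1
      · rw [one_div_mul_cancel ht0.ne', ENNReal.rpow_one]
      · congr 1
        rw [one_div, inv_div]
        field_simp
  -- combine
  calc (‖⨍ y in s, f y ∂μ‖₊ : ℝ≥0∞) ^ t ≤ ((μ s)⁻¹ * J) ^ t :=
        ENNReal.rpow_le_rpow hstep1 ht0.le
  _ = ((μ s) ^ t)⁻¹ * J ^ t := by
      rw [ENNReal.mul_rpow_of_nonneg _ _ ht0.le, ENNReal.inv_rpow]
  _ ≤ ((μ s) ^ t)⁻¹ * (A * (μ s) ^ (t - 1)) := mul_le_mul_right hstep2 _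
  _ = (μ s)⁻¹ * A := by
      have h1 : (μ s) ^ t = (μ s) ^ (t - 1) * μ s := by
        nth_rewrite 3 [← ENNReal.rpow_one (μ s)]
        rw [← ENNReal.rpow_add _ _ hs0 hstop]
        norm_num
      have hne0 : (μ s) ^ (t - 1) ≠ 0 := (ENNReal.rpow_pos (pos_iff_ne_zero.2 hs0) hstop).ne'
      have hnetop : (μ s) ^ (t - 1) ≠ ∞ := ENNReal.rpow_ne_top_of_nonneg (by linarith) hstop
      rw [h1, ENNReal.mul_inv (Or.inl hne0) (Or.inl hnetop)]
      calc ((μ s) ^ (t-1))⁻¹ * (μ s)⁻¹ * (A * (μ s) ^ (t-1))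
          = ((μ s) ^ (t-1))⁻¹ * ((μ s) ^ (t-1)) * ((μ s)⁻¹ * A) := by ring
      _ = (μ s)⁻¹ * A := by rw [ENNReal.inv_mul_cancel hne0 hnetop, one_mul]

private lemma key_swap {X : Type*} [MetricSpace X] [MeasurableSpace X] [BorelSpace X]
    (μ : Measure X)
    (hμ : ∀ (x : X) (r : ℝ), 0 < r → 0 < μ (ball x r) ∧ μ (ball x r) < ∞)
    {r C : ℝ} (hr : 0 < r) (hC : 0 < C)
    (hcomp : ∀ y : X, ∀ᵐ x ∂μ.restrict (ball y r),
      μ (ball y r) ≤ ENNReal.ofReal C * μ (ball x r))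
    (φ : X → ℝ≥0∞) (hφm : Measurable φ) (hφ : ∫⁻ y, φ y ∂μ ≠ ∞) :
    ∫⁻ x, (μ (ball x r))⁻¹ * ∫⁻ y in ball x r, φ y ∂μ ∂μ
      ≤ ENNReal.ofReal C * ∫⁻ y, φ y ∂μ := by
  classical
  set ψ : X → ℝ≥0∞ := fun x => μ (ball x r) with hψ
  have hψm : Measurable ψ := by
    have : ψ = fun x => ∫⁻ _ in ball x r, (1:ℝ≥0∞) ∂μ := by
      funext x; rw [setLIntegral_one]
    rw [this]
    exact (lsc_ball_lintegral μ hr _ measurable_const).measurable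
  have hψ0 : ∀ x, ψ x ≠ 0 := fun x => (hμ x r hr).1.ne'
  have hψtop : ∀ x, ψ x ≠ ∞ := fun x => (hμ x r hr).2.ne
  -- the sigma-finite core of φ
  set s : ℕ → Set X := fun n => {y | ((n:ℝ≥0∞)+1)⁻¹ ≤ φ y} with hs
  have hsm : ∀ n, MeasurableSet (s n) := fun n => measurableSet_le measurable_const hφm
  have hsfin : ∀ n, μ (s n) < ∞ := by
    intro n
    have hε0 : ((n:ℝ≥0∞)+1)⁻¹ ≠ 0 := by simp
    have hεtop : ((n:ℝ≥0∞)+1)⁻¹ ≠ ∞ := by simp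
    calc μ (s n) ≤ (∫⁻ y, φ y ∂μ) / ((n:ℝ≥0∞)+1)⁻¹ :=
          meas_ge_le_lintegral_div hφm.aemeasurable hε0 hεtop
    _ < ∞ := ENNReal.div_lt_top hφ hε0
  set S : Set X := ⋃ n, s n with hSdef
  have hSm : MeasurableSet S := MeasurableSet.iUnion hsm
  have hφS : ∀ y, y ∉ S → φ y = 0 := by
    intro y hyS
    by_contra h0
    obtain ⟨m, hm⟩ := ENNReal.exists_inv_nat_lt h0
    have h1 : ((m:ℝ≥0∞)+1)⁻¹ ≤ φ y := by
      refine le_trans (ENNReal.inv_le_inv' ?_) hm.le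
      exact le_self_add
    exact hyS (mem_iUnion.2 ⟨m, h1⟩)
  set ν : Measure X := μ.restrict S with hν
  haveI hνsf : SigmaFinite ν := by
    refine ⟨⟨⟨fun n => s n ∪ Sᶜ, fun _ => trivial, ?_, ?_⟩⟩⟩
    · intro n
      rw [hν, Measure.restrict_apply ((hsm n).union hSm.compl)]
      refine lt_of_le_of_lt (measure_mono ?_) (hsfin n)
      rintro y ⟨hy1 | hy2, hyS⟩
      · exact hy1
      · exact absurd hyS hy2
    · rw [eq_univ_iff_forall]
      intro y
      by_cases hyS : y ∈ S
      · obtain ⟨n, hn⟩ := mem_iUnion.1 hyS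
        exact mem_iUnion.2 ⟨n, Or.inl hn⟩
      · exact mem_iUnion.2 ⟨0, Or.inr hyS⟩
  -- the covering finsets
  have hcover : ∀ n k : ℕ, ∃ Y : Finset X,
      ∀ x : X, ((k:ℝ≥0∞)+1)⁻¹ ≤ μ (ball x r ∩ s n) → ∃ y ∈ Y, dist x y < 2*r := by
    intro n k
    set T := {x : X | ((k:ℝ≥0∞)+1)⁻¹ ≤ μ (ball x r ∩ s n)} with hT
    set P : ℕ → Prop := fun j => ∃ Y : Finset X, ↑Y ⊆ T ∧
        (∀ a ∈ Y, ∀ b ∈ Y, a ≠ b → 2*r ≤ dist a b) ∧ Y.card = j with hP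
    have hP0 : P 0 := ⟨∅, by simp, by simp, rfl⟩
    set N : ℕ := ⌈((((k:ℝ≥0∞)+1) * μ (s n)).toReal)⌉₊ with hN
    have hktop : ((k:ℝ≥0∞)+1) ≠ ∞ := by simp
    have hk0 : ((k:ℝ≥0∞)+1) ≠ 0 := by simp
    have hBtop : ((k:ℝ≥0∞)+1) * μ (s n) ≠ ∞ := ENNReal.mul_ne_top hktop (hsfin n).ne
    have hbound : ∀ j, P j → j ≤ N := by
      rintro j ⟨Y, hYT, hYsep, hYcard⟩
      have hdisj : (↑Y : Set X).PairwiseDisjoint (fun y => ball y r ∩ s n) := by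
        intro a ha b hb hab
        have h2 : Disjoint (ball a r) (ball b r) :=
          ball_disjoint_ball (by linarith [hYsep a ha b hb hab])
        exact h2.mono inter_subset_left inter_subset_left
      have hsum : ∑ y ∈ Y, μ (ball y r ∩ s n) ≤ μ (s n) := by
        rw [← measure_biUnion_finset hdisj
          (fun y _ => measurableSet_ball.inter (hsm n))]
        exact measure_mono (iUnion₂_subset fun y _ => inter_subset_right)
      have hsum2 : (j : ℝ≥0∞) * ((k:ℝ≥0∞)+1)⁻¹ ≤ μ (s n) := by
        calc (j:ℝ≥0∞) * ((k:ℝ≥0∞)+1)⁻¹ = ∑ _y ∈ Y, ((k:ℝ≥0∞)+1)⁻¹ := by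
              rw [Finset.sum_const, hYcard, nsmul_eq_mul]
        _ ≤ ∑ y ∈ Y, μ (ball y r ∩ s n) := Finset.sum_le_sum (fun y hy => hYT hy)
        _ ≤ μ (s n) := hsum
      have hj : (j:ℝ≥0∞) ≤ ((k:ℝ≥0∞)+1) * μ (s n) := by
        calc (j:ℝ≥0∞) = (j:ℝ≥0∞) * (((k:ℝ≥0∞)+1)⁻¹ * ((k:ℝ≥0∞)+1)) := by
              rw [ENNReal.inv_mul_cancel hk0 hktop, mul_one]
        _ = ((j:ℝ≥0∞) * ((k:ℝ≥0∞)+1)⁻¹) * ((k:ℝ≥0∞)+1) := by ring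
        _ ≤ μ (s n) * ((k:ℝ≥0∞)+1) := mul_le_mul_left hsum2 _
        _ = ((k:ℝ≥0∞)+1) * μ (s n) := mul_comm _ _
      have hjr : (j:ℝ) ≤ (((k:ℝ≥0∞)+1) * μ (s n)).toReal := by
        have := ENNReal.toReal_mono hBtop hj
        simpa using this
      have hjN : (j:ℝ) ≤ (N:ℝ) := hjr.trans (Nat.le_ceil _)
      exact_mod_cast hjN
    set J := Nat.findGreatest P N with hJ
    have hPJ : P J := Nat.findGreatest_spec (Nat.zero_le N) hP0
    obtain ⟨Y, hYT, hYsep, hYcard⟩ := hPJ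
    refine ⟨Y, ?_⟩
    intro x hx
    by_contra hcon
    push_neg at hcon
    have hcon' : ∀ y ∈ Y, 2*r ≤ dist x y := hcon
    have hxY : x ∉ Y := by
      intro hxY
      have := hcon' x hxY
      rw [dist_self] at this
      linarith
    have hPJ1 : P (J+1) := by
      refine ⟨insert x Y, ?_, ?_, ?_⟩
      · intro a ha
        rcases Finset.mem_insert.1 (by exact_mod_cast ha) with rfl | ha'
        · exact hx
        · exact hYT ha'
      · intro a ha b hb hab
        rcases Finset.mem_insert.1 ha with rfl | ha' <;>
          rcases Finset.mem_insert.1 hb with rfl | hb'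
        · exact absurd rfl hab
        · exact hcon' b hb'
        · rw [dist_comm]; exact hcon' a ha'
        · exact hYsep a ha' b hb' hab
      · rw [Finset.card_insert_of_notMem hxY, hYcard]
    have hJ1N : J + 1 ≤ N := hbound _ hPJ1
    have := Nat.le_findGreatest hJ1N hPJ1
    omega
  choose Y hY using hcover
  set V : ℕ → ℕ → Set X := fun n k => ⋃ y ∈ Y n k, ball y (2*r) with hV
  have hVm : ∀ n k, MeasurableSet (V n k) :=
    fun n k => (Y n k).measurableSet_biUnion (fun y _ => measurableSet_ball)
  have hVfin : ∀ n k, μ (V n k) < ∞ := by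
    intro n k
    refine lt_of_le_of_lt (measure_biUnion_finset_le _ _) ?_
    refine ENNReal.sum_lt_top.2 (fun y _ => (hμ y (2*r) (by linarith)).2)
  set U : Set X := ⋃ n, ⋃ k, V n k with hU
  have hUm : MeasurableSet U :=
    MeasurableSet.iUnion fun n => MeasurableSet.iUnion fun k => hVm n k
  haveI hUsf : SigmaFinite (μ.restrict U) := by
    refine ⟨⟨⟨fun m => V m.unpair.1 m.unpair.2 ∪ Uᶜ, fun _ => trivial, ?_, ?_⟩⟩⟩
    · intro m
      rw [Measure.restrict_apply ((hVm _ _).union hUm.compl)]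
      refine lt_of_le_of_lt (measure_mono ?_) (hVfin m.unpair.1 m.unpair.2)
      rintro z ⟨hz1 | hz2, hzU⟩
      · exact hz1
      · exact absurd hzU hz2
    · rw [eq_univ_iff_forall]
      intro z
      by_cases hzU : z ∈ U
      · obtain ⟨n, hn⟩ := mem_iUnion.1 hzU
        obtain ⟨k, hk⟩ := mem_iUnion.1 hn
        refine mem_iUnion.2 ⟨Nat.pair n k, Or.inl ?_⟩
        rw [Nat.unpair_pair]
        exact hk
      · exact mem_iUnion.2 ⟨0, Or.inr hzU⟩
  have hUzero : ∀ x, x ∉ U → ∫⁻ y in ball x r, φ y ∂μ = 0 := by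
    intro x hx
    have hm0 : ∀ n, μ (ball x r ∩ s n) = 0 := by
      intro n
      by_contra h0
      obtain ⟨m, hm⟩ := ENNReal.exists_inv_nat_lt h0
      have h1 : ((m:ℝ≥0∞)+1)⁻¹ ≤ μ (ball x r ∩ s n) :=
        le_trans (ENNReal.inv_le_inv' le_self_add) hm.le
      obtain ⟨y, hyY, hyd⟩ := hY n m x h1
      refine hx (mem_iUnion.2 ⟨n, mem_iUnion.2 ⟨m, ?_⟩⟩)
      exact mem_biUnion hyY (mem_ball.2 hyd)
    have hS0 : μ (ball x r ∩ S) = 0 := by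
      rw [hSdef, inter_iUnion, measure_iUnion_null_iff]
      exact hm0
    have hindi : ∀ y, φ y = S.indicator φ y := by
      intro y
      by_cases hyS : y ∈ S
      · rw [Set.indicator_of_mem hyS]
      · rw [Set.indicator_of_notMem hyS, hφS y hyS]
    calc ∫⁻ y in ball x r, φ y ∂μ = ∫⁻ y in ball x r ∩ S, φ y ∂μ := by
          rw [← lintegral_indicator measurableSet_ball,
            ← lintegral_indicator (measurableSet_ball.inter hSm)]
          congr 1
          funext y
          rw [← Set.indicator_indicator]
          congr 1
          funext z
          exact hindi z
    _ = 0 := setLIntegral_measure_zero _ _ hS0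
  -- the kernel
  set F : X → X → ℝ≥0∞ := fun x y => if dist y x < r then (ψ x)⁻¹ * φ y else 0 with hF
  have hstep1 : ∀ x, (ψ x)⁻¹ * ∫⁻ y in ball x r, φ y ∂μ = ∫⁻ y, F x y ∂ν := by
    intro x
    have h2 : S.indicator (F x)
        = fun y => (ball x r).indicator (fun y => (ψ x)⁻¹ * φ y) y := by
      funext y
      by_cases hyb : y ∈ ball x r
      · have hd : dist y x < r := mem_ball.1 hyb
        by_cases hyS : y ∈ S
        · rw [Set.indicator_of_mem hyS, Set.indicator_of_mem hyb]
          simp only [hF, if_pos hd]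
        · rw [Set.indicator_of_notMem hyS, Set.indicator_of_mem hyb, hφS y hyS, mul_zero]
      · have hd : ¬ dist y x < r := fun h => hyb (mem_ball.2 h)
        rw [Set.indicator_of_notMem hyb]
        by_cases hyS : y ∈ S
        · rw [Set.indicator_of_mem hyS]
          simp only [hF, if_neg hd]
        · rw [Set.indicator_of_notMem hyS]
    calc (ψ x)⁻¹ * ∫⁻ y in ball x r, φ y ∂μ
        = ∫⁻ y in ball x r, (ψ x)⁻¹ * φ y ∂μ := (lintegral_const_mul _ hφm).symm
    _ = ∫⁻ y, (ball x r).indicator (fun y => (ψ x)⁻¹ * φ y) y ∂μ :=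
        (lintegral_indicator measurableSet_ball _).symm
    _ = ∫⁻ y, S.indicator (F x) y ∂μ := by rw [h2]
    _ = ∫⁻ y in S, F x y ∂μ := lintegral_indicator hSm _
    _ = ∫⁻ y, F x y ∂ν := rfl
  have hdense : ∀ y : X, ∃ Dy : Set X, Dy.Countable ∧ ball y (2*r) ⊆ closure Dy :=
    fun y => ball_dense_countable μ hμ y (2*r)
  choose Dfun hDc hDd using hdense
  set D : Set X := ⋃ n, ⋃ k, ⋃ y ∈ Y n k, Dfun y with hD
  have hDcount : D.Countable :=
    countable_iUnion fun n => countable_iUnion fun k =>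
      Set.Countable.biUnion (Y n k).countable_toSet (fun y _ => hDc y)
  have hUD : U ⊆ closure D := by
    intro x hx
    obtain ⟨n, hn⟩ := mem_iUnion.1 hx
    obtain ⟨k, hk⟩ := mem_iUnion.1 hn
    obtain ⟨y, hyY, hyb⟩ := mem_iUnion₂.1 hk
    refine closure_mono ?_ (hDd y hyb)
    intro q hq
    exact mem_iUnion.2 ⟨n, mem_iUnion.2 ⟨k, mem_iUnion₂.2 ⟨y, hyY, hq⟩⟩⟩
  set E : Set (X × X) := {z : X × X | z.1 ∈ U ∧ dist z.2 z.1 < r} with hE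
  have hEm : MeasurableSet E := by
    have hEeq : E = ⋃ q ∈ D, ⋃ ρ : ℚ, ⋃ σ : ℚ, ⋃ (_ : (ρ:ℝ) + (σ:ℝ) < r),
        (U ∩ ball q (ρ:ℝ)) ×ˢ (ball q (σ:ℝ)) := by
      ext z
      constructor
      · rintro ⟨hzU, hzd⟩
        set ε : ℝ := (r - dist z.2 z.1)/4 with hεdef
        have hε0 : 0 < ε := by
          rw [hεdef]; linarith
        obtain ⟨q, hqD, hq⟩ := Metric.mem_closure_iff.1 (hUD hzU) ε hε0
        obtain ⟨ρ, hρ1, hρ2⟩ := exists_rat_btwn (show ε < 2*ε by linarith)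
        have hyq : dist z.2 q ≤ dist z.2 z.1 + dist z.1 q := dist_triangle _ _ _
        obtain ⟨σ, hσ1, hσ2⟩ := exists_rat_btwn
          (show dist z.2 z.1 + ε < dist z.2 z.1 + 2*ε by linarith)
        refine mem_iUnion₂.2 ⟨q, hqD, mem_iUnion.2 ⟨ρ, mem_iUnion.2 ⟨σ, mem_iUnion.2 ⟨?_, ?_⟩⟩⟩⟩
        · have h4 : dist z.2 z.1 + 4*ε = r := by rw [hεdef]; ring
          linarith
        · refine mem_prod.2 ⟨⟨hzU, mem_ball.2 (lt_trans hq hρ1)⟩, mem_ball.2 ?_⟩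
          calc dist z.2 q ≤ dist z.2 z.1 + dist z.1 q := hyq
          _ < dist z.2 z.1 + ε := by linarith
          _ < (σ:ℝ) := hσ1
      · intro hz
        obtain ⟨q, hqD, hz⟩ := mem_iUnion₂.1 hz
        obtain ⟨ρ, hz⟩ := mem_iUnion.1 hz
        obtain ⟨σ, hz⟩ := mem_iUnion.1 hz
        obtain ⟨hρσ, hz⟩ := mem_iUnion.1 hz
        obtain ⟨⟨hzU, hz1⟩, hz2⟩ := mem_prod.1 hz
        refine ⟨hzU, ?_⟩
        calc dist z.2 z.1 ≤ dist z.2 q + dist q z.1 := dist_triangle _ _ _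
        _ < (σ:ℝ) + (ρ:ℝ) := add_lt_add (mem_ball.1 hz2)
              (by rw [dist_comm]; exact mem_ball.1 hz1)
        _ < r := by linarith
    rw [hEeq]
    refine MeasurableSet.biUnion hDcount (fun q _ => ?_)
    refine MeasurableSet.iUnion (fun ρ => ?_)
    refine MeasurableSet.iUnion (fun σ => ?_)
    refine MeasurableSet.iUnion (fun _ => ?_)
    exact (hUm.inter measurableSet_ball).prod measurableSet_ball
  have hFae : AEMeasurable (Function.uncurry F) ((μ.restrict U).prod ν) := by
    have hGm : Measurable (E.indicator (fun z : X × X => (ψ z.1)⁻¹ * φ z.2)) :=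
      (((hψm.comp measurable_fst).inv).mul (hφm.comp measurable_snd)).indicator hEm
    refine hGm.aemeasurable.congr (ae_iff.2 ?_)
    have hsub : {z : X × X |
        ¬ (E.indicator (fun z : X × X => (ψ z.1)⁻¹ * φ z.2) z = Function.uncurry F z)}
        ⊆ (Uᶜ ×ˢ (univ : Set X)) := by
      intro z hz
      simp only [mem_setOf_eq] at hz
      by_contra hzc
      apply hz
      have hzU : z.1 ∈ U := by
        by_contra h1
        exact hzc (mem_prod.2 ⟨h1, mem_univ _⟩)
      by_cases hd : dist z.2 z.1 < r
      · rw [Set.indicator_of_mem (show z ∈ E from ⟨hzU, hd⟩)]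
        simp only [Function.uncurry, hF, if_pos hd]
      · rw [Set.indicator_of_notMem (fun hzE => hd (hE ▸ hzE).2)]
        simp only [Function.uncurry, hF, if_neg hd]
    have hnull : ((μ.restrict U).prod ν) (Uᶜ ×ˢ (univ : Set X)) = 0 := by
      rw [Measure.prod_prod, Measure.restrict_apply hUm.compl]
      simp [compl_inter_self]
    exact measure_mono_null hsub hnull
  have hCne0 : ENNReal.ofReal C ≠ 0 := (ENNReal.ofReal_pos.2 hC).ne'
  have hCnetop : ENNReal.ofReal C ≠ ∞ := ENNReal.ofReal_ne_top
  have hinner : ∀ y, ∫⁻ x, F x y ∂(μ.restrict U) ≤ ENNReal.ofReal C * φ y := by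
    intro y
    have h2 : (fun x => F x y)
        = fun x => (ball y r).indicator (fun x => (ψ x)⁻¹ * φ y) x := by
      funext x
      by_cases hxb : x ∈ ball y r
      · have hd : dist y x < r := by rw [dist_comm]; exact mem_ball.1 hxb
        rw [Set.indicator_of_mem hxb]
        simp only [hF, if_pos hd]
      · have hd : ¬ dist y x < r := by
          rw [dist_comm]; exact fun h => hxb (mem_ball.2 h)
        rw [Set.indicator_of_notMem hxb]
        simp only [hF, if_neg hd]
    calc ∫⁻ x, F x y ∂(μ.restrict U) ≤ ∫⁻ x, F x y ∂μ :=
          lintegral_mono' Measure.restrict_le_self (le_refl _)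
    _ = ∫⁻ x in ball y r, (ψ x)⁻¹ * φ y ∂μ := by
        rw [h2]; exact lintegral_indicator measurableSet_ball _
    _ ≤ ∫⁻ _x in ball y r, (ENNReal.ofReal C * (ψ y)⁻¹) * φ y ∂μ := by
        apply lintegral_mono_ae
        filter_upwards [hcomp y] with x hx
        apply mul_le_mul_left
        have hinv : (ENNReal.ofReal C * ψ x)⁻¹ ≤ (ψ y)⁻¹ := ENNReal.inv_le_inv' hx
        rw [ENNReal.mul_inv (Or.inl hCne0) (Or.inl hCnetop)] at hinv
        calc (ψ x)⁻¹ = ENNReal.ofReal C * ((ENNReal.ofReal C)⁻¹ * (ψ x)⁻¹) := by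
              rw [← mul_assoc, ENNReal.mul_inv_cancel hCne0 hCnetop, one_mul]
        _ ≤ ENNReal.ofReal C * (ψ y)⁻¹ := mul_le_mul_right hinv _
    _ = (ENNReal.ofReal C * (ψ y)⁻¹) * φ y * μ (ball y r) := setLIntegral_const _ _
    _ = ENNReal.ofReal C * φ y * ((ψ y)⁻¹ * ψ y) := by rw [hψ]; ring
    _ = ENNReal.ofReal C * φ y := by
        rw [ENNReal.inv_mul_cancel (hψ0 y) (hψtop y), mul_one]
  calc ∫⁻ x, (ψ x)⁻¹ * ∫⁻ y in ball x r, φ y ∂μ ∂μ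
      = ∫⁻ x, ∫⁻ y, F x y ∂ν ∂μ := lintegral_congr (fun x => hstep1 x)
  _ = ∫⁻ x, U.indicator (fun x => ∫⁻ y, F x y ∂ν) x ∂μ := by
      apply lintegral_congr
      intro x
      by_cases hxU : x ∈ U
      · rw [Set.indicator_of_mem hxU]
      · rw [Set.indicator_of_notMem hxU, ← hstep1 x, hUzero x hxU, mul_zero]
  _ = ∫⁻ x in U, ∫⁻ y, F x y ∂ν ∂μ := lintegral_indicator hUm _
  _ = ∫⁻ y, ∫⁻ x, F x y ∂(μ.restrict U) ∂ν := lintegral_lintegral_swap hFae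
  _ ≤ ∫⁻ y, ENNReal.ofReal C * φ y ∂ν := lintegral_mono (fun y => hinner y)
  _ = ENNReal.ofReal C * ∫⁻ y, φ y ∂ν := lintegral_const_mul _ hφm
  _ ≤ ENNReal.ofReal C * ∫⁻ y, φ y ∂μ :=
      mul_le_mul_right (lintegral_mono' Measure.restrict_le_self (le_refl _)) _

/-- On a metric measure space whose measure satisfies a uniform
comparability condition with parameters `r₀, C`, the averaging operator
`A_r f x = ⨍_{B_r(x)} f dμ` maps `L^p` boundedly into itself with norm at most
`C^(1/p)`, for every `r ∈ (0, r₀)` and `p ∈ [1, ∞)`. -/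
theorem stmt_0 {X : Type*} [MetricSpace X] [MeasurableSpace X] [BorelSpace X]
    (μ : Measure X)
    (hμ : ∀ (x : X) (r : ℝ), 0 < r → 0 < μ (ball x r) ∧ μ (ball x r) < ∞)
    (p : ℝ≥0∞) (hp1 : 1 ≤ p) (hptop : p ≠ ∞)
    (r₀ C : ℝ) (hr₀ : 0 < r₀) (hC : 0 < C)
    (hcomp : ∀ (x : X) (r : ℝ), 0 < r → r < r₀ →
      ∀ᵐ y ∂μ.restrict (ball x r), μ (ball x r) ≤ ENNReal.ofReal C * μ (ball y r))
    (r : ℝ) (hr : 0 < r) (hrr₀ : r < r₀)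
    (f : X → ℝ) (hf : MemLp f p μ) :
    MemLp (fun x => ⨍ y in ball x r, f y ∂μ) p μ ∧
      eLpNorm (fun x => ⨍ y in ball x r, f y ∂μ) p μ ≤
        ENNReal.ofReal (C ^ (1 / p.toReal)) * eLpNorm f p μ := by
  have hp0 : p ≠ 0 := by
    intro h
    rw [h] at hp1
    simp at hp1
  set t : ℝ := p.toReal with htdef
  have ht1 : 1 ≤ t := by
    rw [htdef, ← ENNReal.toReal_one]
    exact ENNReal.toReal_mono hptop hp1
  have ht0 : 0 < t := lt_of_lt_of_le one_pos ht1
  obtain ⟨hfm, hflt⟩ := hf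
  set f' : X → ℝ := hfm.mk f with hf'def
  have hf'sm : StronglyMeasurable f' := hfm.stronglyMeasurable_mk
  have hff' : f =ᵐ[μ] f' := hfm.ae_eq_mk
  have hf'meas : Measurable f' := hf'sm.measurable
  have hfMem' : MemLp f' p μ := MemLp.ae_eq hff' ⟨hfm, hflt⟩
  set ψ : X → ℝ≥0∞ := fun x => μ (ball x r) with hψdef
  have hψm : Measurable ψ := by
    have h1 : ψ = fun x => ∫⁻ _ in ball x r, (1:ℝ≥0∞) ∂μ := by
      funext x; rw [setLIntegral_one]
    rw [h1]
    exact (lsc_ball_lintegral μ hr _ measurable_const).measurable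
  have hψ0 : ∀ x, ψ x ≠ 0 := fun x => (hμ x r hr).1.ne'
  have hψtop : ∀ x, ψ x ≠ ∞ := fun x => (hμ x r hr).2.ne
  have hIntOn : ∀ x : X, IntegrableOn f' (ball x r) μ := by
    intro x
    haveI : IsFiniteMeasure (μ.restrict (ball x r)) := by
      constructor
      rw [Measure.restrict_apply_univ]
      exact (hμ x r hr).2
    exact (hfMem'.restrict (ball x r)).integrable hp1
  set g : X → ℝ := fun x => ⨍ y in ball x r, f y ∂μ with hgdef
  have hgavg : ∀ x, g x = ⨍ y in ball x r, f' y ∂μ := by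
    intro x
    rw [hgdef]
    simp only
    rw [setAverage_eq, setAverage_eq]
    congr 1
    exact integral_congr_ae (ae_restrict_of_ae hff')
  have hgm : Measurable g := by
    have hP : Measurable (fun x => ∫⁻ y in ball x r, ENNReal.ofReal (f' y) ∂μ) :=
      (lsc_ball_lintegral μ hr _ (ENNReal.measurable_ofReal.comp hf'meas)).measurable
    have hN : Measurable (fun x => ∫⁻ y in ball x r, ENNReal.ofReal (-(f' y)) ∂μ) :=
      (lsc_ball_lintegral μ hr _ (ENNReal.measurable_ofReal.comp hf'meas.neg)).measurable
    have hgeq : g = fun x => (ψ x).toReal⁻¹ *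
        ((∫⁻ y in ball x r, ENNReal.ofReal (f' y) ∂μ).toReal
          - (∫⁻ y in ball x r, ENNReal.ofReal (-(f' y)) ∂μ).toReal) := by
      funext x
      rw [hgavg x, setAverage_eq, smul_eq_mul]
      congr 1
      exact integral_eq_lintegral_pos_part_sub_lintegral_neg_part (hIntOn x)
    rw [hgeq]
    exact (hψm.ennreal_toReal.inv).mul (hP.ennreal_toReal.sub hN.ennreal_toReal)
  set φ : X → ℝ≥0∞ := fun y => (‖f' y‖₊ : ℝ≥0∞) ^ t with hφdef
  have hφm : Measurable φ :=
    (measurable_coe_nnreal_ennreal.comp hf'meas.nnnorm).pow measurable_const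
  have hφeq : ∫⁻ y, φ y ∂μ = (eLpNorm f' p μ) ^ t := by
    rw [eLpNorm_eq_lintegral_rpow_enorm_toReal hp0 hptop, ← htdef, ← ENNReal.rpow_mul,
      one_div, inv_mul_cancel₀ ht0.ne', ENNReal.rpow_one]
    rfl
  have hφint : ∫⁻ y, φ y ∂μ ≠ ∞ := by
    rw [hφeq]
    exact (ENNReal.rpow_lt_top_of_nonneg ht0.le hfMem'.2.ne).ne
  have hpt : ∀ x, (‖g x‖₊ : ℝ≥0∞) ^ t ≤ (ψ x)⁻¹ * ∫⁻ y in ball x r, φ y ∂μ := by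
    intro x
    rw [hgavg x]
    exact avg_pow_le μ ht1 (hψ0 x) (hψtop x) hf'meas.aemeasurable
  have hkey : ∫⁻ x, (‖g x‖₊ : ℝ≥0∞) ^ t ∂μ ≤ ENNReal.ofReal C * ∫⁻ y, φ y ∂μ :=
    le_trans (lintegral_mono hpt)
      (key_swap μ hμ hr hC (fun y => hcomp y r hr hrr₀) φ hφm hφint)
  have hφf : ∫⁻ y, φ y ∂μ = ∫⁻ y, (‖f y‖₊ : ℝ≥0∞) ^ t ∂μ := by
    apply lintegral_congr_ae
    filter_upwards [hff'] with y hy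
    rw [hy]
  have heg : eLpNorm g p μ = (∫⁻ x, (‖g x‖₊ : ℝ≥0∞) ^ t ∂μ) ^ (1/t) := by
    rw [eLpNorm_eq_lintegral_rpow_enorm_toReal hp0 hptop, ← htdef]
    rfl
  have hef : eLpNorm f p μ = (∫⁻ x, (‖f x‖₊ : ℝ≥0∞) ^ t ∂μ) ^ (1/t) := by
    rw [eLpNorm_eq_lintegral_rpow_enorm_toReal hp0 hptop, ← htdef]
    rfl
  have hfin : eLpNorm g p μ ≤ ENNReal.ofReal (C ^ (1/t)) * eLpNorm f p μ := by
    rw [heg, hef]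
    calc (∫⁻ x, (‖g x‖₊:ℝ≥0∞)^t ∂μ)^(1/t)
        ≤ (ENNReal.ofReal C * ∫⁻ y, (‖f y‖₊:ℝ≥0∞)^t ∂μ)^(1/t) := by
          apply ENNReal.rpow_le_rpow _ (by positivity)
          rw [← hφf]
          exact hkey
    _ = (ENNReal.ofReal C)^(1/t) * (∫⁻ y, (‖f y‖₊:ℝ≥0∞)^t ∂μ)^(1/t) :=
          ENNReal.mul_rpow_of_nonneg _ _ (by positivity)
    _ = ENNReal.ofReal (C^(1/t)) * (∫⁻ y, (‖f y‖₊:ℝ≥0∞)^t ∂μ)^(1/t) := by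
          rw [ENNReal.ofReal_rpow_of_pos hC]
  constructor
  · refine ⟨hgm.aestronglyMeasurable, ?_⟩
    calc eLpNorm g p μ ≤ ENNReal.ofReal (C ^ (1/t)) * eLpNorm f p μ := hfin
    _ < ∞ := ENNReal.mul_lt_top ENNReal.ofReal_lt_top hflt
  · exact hfin
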